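/- Let d ≥ 1, k = (k_1,…,k_d) positive integers, and ρ ∈ (0,1). Let 𝓕 = 𝓕^1 ⊗ ⋯ ⊗ 𝓕^d be a product of interval σ-algebras on a d-dimensional rectangle I, and let B = B^1 × ⋯ × B^d, where each B^δ is a union of at least one and at most 3k_δ consecutive atoms of 𝓕^δ. Then there is a constant C depending only on k, d and ρ such that for every u ∈ L^1(I) and every x ∈ B: (1/|B|) ∫_B |u(t)| dt ≤ C · Σ_{A atom of 𝓕} ρ^{|d(A, A(x))|_1} / |conv(A, A(x))| · ∫_A |u(t)| dt. -/

import Mathlib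

open MeasureTheory Set

structure IntervalPartition where
  a : ℝ
  b : ℝ
  m : ℕ
  m_pos : 0 < m
  t : Fin (m + 1) → ℝ
  t_mono : StrictMono t
  t_first : t 0 = a
  t_last : t (Fin.last m) = b

namespace IntervalPartition

/-- The `i`-th breakpoint of the partition (extended to all of `ℕ`). -/
def pt (P : IntervalPartition) (i : ℕ) : ℝ :=
  P.t ⟨min i P.m, Nat.lt_succ_of_le (min_le_right _ _)⟩

/-- The underlying interval `[a, b)`. -/
def interval (P : IntervalPartition) : Set ℝ := Set.Ico P.a P.b

/-- The `i`-th atom of the partition, `[t_i, t_{i+1})`. -/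
def atomN (P : IntervalPartition) (i : ℕ) : Set ℝ := Set.Ico (P.pt i) (P.pt (i + 1))

/-- The length of the `i`-th atom. -/
def atomLen (P : IntervalPartition) (i : ℕ) : ℝ := P.pt (i + 1) - P.pt i

/-- Membership in the spline space `S_k(𝓕)`:  `(k-2)`-times continuously differentiable
on the interval and a polynomial of degree at most `k - 1` on each atom. -/
def IsSpline (k : ℕ) (P : IntervalPartition) (f : ℝ → ℝ) : Prop :=
  (2 ≤ k → ContDiffOn ℝ (k - 2 : ℕ) f P.interval) ∧
  ∀ i < P.m, ∃ p : Polynomial ℝ, p.natDegree ≤ k - 1 ∧ ∀ x ∈ P.atomN i, f x = p.eval x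

/-- `P.Refines Q` : `Q` is finer than `P` (same interval, more breakpoints). -/
def Refines (P Q : IntervalPartition) : Prop :=
  P.a = Q.a ∧ P.b = Q.b ∧ Set.range P.t ⊆ Set.range Q.t

/-- The pair `(i, j)` describes a B-spline support of order `r`:
the union of the consecutive atoms `i, …, j`, where either `j - i + 1 = r`, or
`j - i + 1 < r` and the union touches an endpoint of the interval. -/
def IsBSupportIdx (P : IntervalPartition) (r i j : ℕ) : Prop :=
  i ≤ j ∧ j < P.m ∧ (j + 1 - i = r ∨ (j + 1 - i < r ∧ (i = 0 ∨ j = P.m - 1)))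

/-- The B-spline support as a set. -/
def bSupportSet (P : IntervalPartition) (i j : ℕ) : Set ℝ := Set.Ico (P.pt i) (P.pt (j + 1))

/-- The length of a B-spline support. -/
def bSupportLen (P : IntervalPartition) (i j : ℕ) : ℝ := P.pt (j + 1) - P.pt i

/-- `k`-regularity with parameter `γ` of a single interval σ-algebra: any two B-spline
supports of order `k` at Euclidean distance zero have comparable lengths. -/
def KRegular (P : IntervalPartition) (k : ℕ) (γ : ℝ) : Prop :=
  ∀ i j i' j' : ℕ, P.IsBSupportIdx k i j → P.IsBSupportIdx k i' j' →
    P.pt i' ≤ P.pt (j + 1) → P.pt i ≤ P.pt (j' + 1) →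
    P.bSupportLen i j ≤ γ * P.bSupportLen i' j'

-- The index of the atom containing `x` (junk value if there is none).
open Classical in
noncomputable def idx (P : IntervalPartition) (x : ℝ) : ℕ :=
  if h : ∃ i, i < P.m ∧ x ∈ P.atomN i then h.choose else 0

end IntervalPartition

/-- The `d`-dimensional rectangle underlying a product of interval σ-algebras. -/
def rect {d : ℕ} (P : Fin d → IntervalPartition) : Set (Fin d → ℝ) :=
  Set.univ.pi fun δ => (P δ).interval

/-- The atom of the product σ-algebra with index vector `i`. -/
def prodAtomN {d : ℕ} (P : Fin d → IntervalPartition) (i : Fin d → ℕ) : Set (Fin d → ℝ) :=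
  Set.univ.pi fun δ => (P δ).atomN (i δ)

/-- `|d(A,B)|₁` for atoms with index vectors `i`, `j`. -/
def dist1 {d : ℕ} (i j : Fin d → ℕ) : ℕ := ∑ δ, ((i δ : ℤ) - (j δ : ℤ)).natAbs

/-- The volume of `conv(A, B)`, the smallest axis-parallel rectangle containing the
atoms with index vectors `i` and `j`. -/
def convVol {d : ℕ} (P : Fin d → IntervalPartition) (i j : Fin d → ℕ) : ℝ :=
  ∏ δ, ((P δ).pt (max (i δ) (j δ) + 1) - (P δ).pt (min (i δ) (j δ)))

/-- The kernel sum `Σ_A q^{|d(A, A_ix)|₁} / |conv(A, A_ix)| ∫_A |f|`. -/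
noncomputable def kern {d : ℕ} (P : Fin d → IntervalPartition) (q : ℝ)
    (f : (Fin d → ℝ) → ℝ) (ix : Fin d → ℕ) : ℝ :=
  ∑ ia : (∀ δ, Fin ((P δ).m)),
    q ^ dist1 (fun δ => (ia δ : ℕ)) ix / convVol P (fun δ => (ia δ : ℕ)) ix *
      ∫ y in prodAtomN P (fun δ => (ia δ : ℕ)), |f y|

/-- Coordinatewise `k`-regularity with parameter `γ` of a multivariate filtration. -/
def KRegularAll (d : ℕ) (F : ℕ → Fin d → IntervalPartition) (k : Fin d → ℕ) (γ : ℝ) : Prop :=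
  ∀ n δ, (F n δ).KRegular (k δ) γ

/-- Direction `r`-regularity with parameter `β`: there is no direction `δ`, no
monotone sequence of times `n 0 ≤ n 1 ≤ …`, no strictly decreasing chain of atoms
`prodAtomN (F (n 0)) (ix 0) ⊋ … ⊋ prodAtomN (F (n (β-1))) (ix (β-1))` and no B-spline
support `B` of order `r δ` in the `δ`-th coordinate of `F (n 0)` containing the `δ`-th
component of the first atom such that `B` is still a B-spline support of order `r δ`
in the `δ`-th coordinate of `F (n (β-1))`. -/
def DirRegular (d : ℕ) (F : ℕ → Fin d → IntervalPartition) (r : Fin d → ℕ) (β : ℕ) : Prop :=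
  ¬ ∃ (δ : Fin d) (n : ℕ → ℕ) (ix : ℕ → Fin d → ℕ) (i j : ℕ),
      (∀ l l', l ≤ l' → n l ≤ n l') ∧
      (∀ l, l < β → ∀ δ', ix l δ' < (F (n l) δ').m) ∧
      (∀ l l', l < l' → l' < β →
        prodAtomN (F (n l')) (ix l') ⊂ prodAtomN (F (n l)) (ix l)) ∧
      (F (n 0) δ).IsBSupportIdx (r δ) i j ∧
      (F (n 0) δ).atomN (ix 0 δ) ⊆ (F (n 0) δ).bSupportSet i j ∧
      ∃ i' j', (F (n (β - 1)) δ).IsBSupportIdx (r δ) i' j' ∧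
        (F (n (β - 1)) δ).bSupportSet i' j' = (F (n 0) δ).bSupportSet i j

/-- The tensor product spline space: the linear span of products of coordinate splines. -/
def TensorSplineSpan (d : ℕ) (k : Fin d → ℕ) (P : Fin d → IntervalPartition) :
    Submodule ℝ ((Fin d → ℝ) → ℝ) :=
  Submodule.span ℝ {G : (Fin d → ℝ) → ℝ |
    ∃ g : Fin d → ℝ → ℝ, (∀ δ, IntervalPartition.IsSpline (k δ) (P δ) (g δ)) ∧
      G = fun x => ∏ δ, g δ (x δ)}

/-- `g` is the orthogonal projection (in `L²` of the rectangle) of `f` onto the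
tensor product spline space. -/
def IsProj (d : ℕ) (k : Fin d → ℕ) (P : Fin d → IntervalPartition)
    (f g : (Fin d → ℝ) → ℝ) : Prop :=
  g ∈ TensorSplineSpan d k P ∧ ∀ h ∈ TensorSplineSpan d k P,
    ∫ x in rect P, g x * h x = ∫ x in rect P, f x * h x

/-- A multivariate interval filtration in standard form: it starts from the trivial
σ-algebra and at each step exactly one atom of exactly one coordinate σ-algebra is
split into two. -/
def StandardForm (d : ℕ) (F : ℕ → Fin d → IntervalPartition) : Prop :=
  (∀ δ, (F 0 δ).m = 1) ∧
  ∀ n, ∃ δ₀, (∀ δ, δ ≠ δ₀ → F (n + 1) δ = F n δ) ∧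
    (F n δ₀).Refines (F (n + 1) δ₀) ∧ (F (n + 1) δ₀).m = (F n δ₀).m + 1


namespace IntervalPartition

lemma pt_mono (P : IntervalPartition) : Monotone P.pt := by
  intro a b hab
  exact P.t_mono.monotone (by simp only [Fin.mk_le_mk]; omega)

lemma pt_lt_pt (P : IntervalPartition) {a b : ℕ} (hab : a < b) (hb : b ≤ P.m) :
    P.pt a < P.pt b := by
  apply P.t_mono
  simp only [Fin.mk_lt_mk]
  omega

lemma pt_le_b (P : IntervalPartition) (n : ℕ) : P.pt n ≤ P.b := by
  rw [← P.t_last]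
  exact P.t_mono.monotone (by simp [Fin.le_def, Fin.last])

lemma a_le_pt (P : IntervalPartition) (n : ℕ) : P.a ≤ P.pt n := by
  rw [← P.t_first]
  exact P.t_mono.monotone (by simp [Fin.le_def])

lemma atomN_subset_interval (P : IntervalPartition) (j : ℕ) :
    P.atomN j ⊆ P.interval :=
  Set.Ico_subset_Ico (P.a_le_pt j) (P.pt_le_b (j + 1))

lemma atom_disjoint (P : IntervalPartition) {a b : ℕ} (hab : a ≠ b) :
    Disjoint (P.atomN a) (P.atomN b) := by
  wlog h : a < b generalizing a b
  · exact (this hab.symm (by omega)).symm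
  rw [Set.disjoint_left]
  rintro x ⟨_, hx2⟩ ⟨hx3, _⟩
  exact absurd (hx2.trans_le ((P.pt_mono (by omega : a + 1 ≤ b)).trans hx3)) (lt_irrefl x)

lemma mem_atom_of_mem_Ico (P : IntervalPartition) {i l : ℕ} (hl : 1 ≤ l)
    {y : ℝ} (hy : y ∈ Set.Ico (P.pt i) (P.pt (i + l))) :
    ∃ j, i ≤ j ∧ j < i + l ∧ y ∈ P.atomN j := by
  classical
  set Q : ℕ → Prop := fun j => P.pt j ≤ y with hQ
  have hi : i ≤ i + l - 1 := by omega
  have hQi : Q i := hy.1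
  have hle : Nat.findGreatest Q (i + l - 1) ≤ i + l - 1 := Nat.findGreatest_le _
  refine ⟨Nat.findGreatest Q (i + l - 1), Nat.le_findGreatest hi hQi, by omega,
    Nat.findGreatest_spec hi hQi, ?_⟩
  by_cases h : Nat.findGreatest Q (i + l - 1) + 1 ≤ i + l - 1
  · have := Nat.findGreatest_is_greatest (Nat.lt_succ_self _) h
    exact not_le.mp this
  · have hj : Nat.findGreatest Q (i + l - 1) + 1 = i + l := by omega
    rw [hj]; exact hy.2

end IntervalPartition

open IntervalPartition in
lemma convVol_pos {d : ℕ} (P : Fin d → IntervalPartition) (a b : Fin d → ℕ)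
    (ha : ∀ δ, a δ < (P δ).m) (hb : ∀ δ, b δ < (P δ).m) : 0 < convVol P a b := by
  apply Finset.prod_pos
  intro δ _
  rw [sub_pos]
  exact (P δ).pt_lt_pt (by omega) (by have := ha δ; have := hb δ; omega)

open IntervalPartition in
lemma prodAtomN_subset_rect {d : ℕ} (P : Fin d → IntervalPartition) (a : Fin d → ℕ) :
    prodAtomN P a ⊆ rect P :=
  Set.pi_mono fun δ _ => (P δ).atomN_subset_interval (a δ)

/-- **Pointwise comparison with the maximal kernel (Section 5.1).** There is a constant
`C` depending only on `k`, `d`, `ρ` such that for every product interval σ-algebra `𝓕`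
on a `d`-dimensional rectangle, every set `B = B¹ × ⋯ × B^d` where each `B^δ` consists
of at most `3 k_δ` consecutive atoms, every `u ∈ L¹` and every `x ∈ B` lying in the atom
with index vector `ix`:
`|B|⁻¹ ∫_B |u| ≤ C Σ_{A atom} ρ^{|d(A, A(x))|₁} / |conv(A, A(x))| ∫_A |u|`. -/
theorem average_le_maximal_kernel (d : ℕ) (hd : 1 ≤ d) (k : Fin d → ℕ)
    (hk : ∀ δ, 1 ≤ k δ) (ρ : ℝ) (hρ0 : 0 < ρ) (hρ1 : ρ < 1) :
    ∃ C : ℝ, 0 < C ∧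
      ∀ (P : Fin d → IntervalPartition) (i l : Fin d → ℕ),
        (∀ δ, 1 ≤ l δ ∧ l δ ≤ 3 * k δ ∧ i δ + l δ ≤ (P δ).m) →
        ∀ u : (Fin d → ℝ) → ℝ, IntegrableOn u (rect P) →
        ∀ x ∈ Set.univ.pi fun δ => Set.Ico ((P δ).pt (i δ)) ((P δ).pt (i δ + l δ)),
        ∀ ix : Fin d → ℕ, (∀ δ, ix δ < (P δ).m) → x ∈ prodAtomN P ix →
          (volume (Set.univ.pi fun δ =>
              Set.Ico ((P δ).pt (i δ)) ((P δ).pt (i δ + l δ)))).toReal⁻¹ *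
            (∫ y in (Set.univ.pi fun δ =>
              Set.Ico ((P δ).pt (i δ)) ((P δ).pt (i δ + l δ))), |u y|) ≤
          C * kern P ρ u ix := by
  classical
  refine ⟨(ρ ^ (3 * ∑ δ, k δ))⁻¹, inv_pos.mpr (pow_pos hρ0 _), ?_⟩
  intro P i l hil u hu x hx ix hixm hxa
  set C : ℝ := (ρ ^ (3 * ∑ δ, k δ))⁻¹ with hC
  set B : Set (Fin d → ℝ) :=
    Set.univ.pi fun δ => Set.Ico ((P δ).pt (i δ)) ((P δ).pt (i δ + l δ)) with hBdef
  have hix' : ∀ δ, i δ ≤ ix δ ∧ ix δ < i δ + l δ := by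
    intro δ
    obtain ⟨j, hj1, hj2, hjmem⟩ :=
      (P δ).mem_atom_of_mem_Ico (hil δ).1 (hx δ (Set.mem_univ δ))
    have hxatom : x δ ∈ (P δ).atomN (ix δ) := hxa δ (Set.mem_univ δ)
    have : j = ix δ := by
      by_contra hne
      exact Set.disjoint_left.mp ((P δ).atom_disjoint hne) hjmem hxatom
    omega
  set s : Finset (Fin d → ℕ) := Fintype.piFinset fun δ => Finset.Ico (i δ) (i δ + l δ) with hs
  have hmem_s : ∀ a, a ∈ s ↔ ∀ δ, i δ ≤ a δ ∧ a δ < i δ + l δ := by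
    intro a; simp [hs, Fintype.mem_piFinset, Finset.mem_Ico]
  have hBeq : B = ⋃ a ∈ s, prodAtomN P a := by
    ext y
    constructor
    · intro hy
      choose j hj1 hj2 hj3 using fun δ =>
        (P δ).mem_atom_of_mem_Ico (hil δ).1 (hy δ (Set.mem_univ δ))
      exact Set.mem_biUnion ((hmem_s j).mpr fun δ => ⟨hj1 δ, hj2 δ⟩) fun δ _ => hj3 δ
    · intro hy
      obtain ⟨a, ha, hya⟩ := Set.mem_iUnion₂.mp hy
      intro δ _
      have h1 := ((hmem_s a).mp ha) δ
      have h2 : y δ ∈ (P δ).atomN (a δ) := hya δ (Set.mem_univ δ)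
      exact ⟨((P δ).pt_mono h1.1).trans h2.1,
        h2.2.trans_le ((P δ).pt_mono (by omega : a δ + 1 ≤ i δ + l δ))⟩
  have hmeas : ∀ a : Fin d → ℕ, MeasurableSet (prodAtomN P a) := fun a =>
    MeasurableSet.univ_pi fun δ => measurableSet_Ico
  have hintOn : ∀ a : Fin d → ℕ, IntegrableOn (fun y => |u y|) (prodAtomN P a) := fun a =>
    (hu.mono_set (prodAtomN_subset_rect P a)).abs
  have hdisj : (↑s : Set (Fin d → ℕ)).Pairwise (Function.onFun Disjoint (prodAtomN P)) := by
    intro a _ b _ hab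
    obtain ⟨δ, hδ⟩ := Function.ne_iff.mp hab
    rw [Function.onFun, Set.disjoint_left]
    intro y hy1 hy2
    exact Set.disjoint_left.mp ((P δ).atom_disjoint hδ)
      (hy1 δ (Set.mem_univ δ)) (hy2 δ (Set.mem_univ δ))
  have hint : ∫ y in B, |u y| = ∑ a ∈ s, ∫ y in prodAtomN P a, |u y| := by
    rw [hBeq]
    exact MeasureTheory.integral_biUnion_finset s (fun a _ => hmeas a) hdisj fun a _ => hintOn a
  have hBvol : (volume B).toReal = ∏ δ, ((P δ).pt (i δ + l δ) - (P δ).pt (i δ)) := by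
    rw [hBdef, volume_pi_pi, ENNReal.toReal_prod]
    refine Finset.prod_congr rfl fun δ _ => ?_
    rw [Real.volume_Ico, ENNReal.toReal_ofReal (sub_nonneg.mpr ((P δ).pt_mono (by omega)))]
  have hmpos : ∀ δ, 0 < (P δ).m := fun δ => (P δ).m_pos
  set e : (Fin d → ℕ) → (∀ δ, Fin ((P δ).m)) :=
    fun a δ => ⟨min (a δ) ((P δ).m - 1), by have := hmpos δ; omega⟩ with he
  have hcoe : ∀ a ∈ s, (fun δ => ((e a δ : ℕ))) = a := by
    intro a ha
    funext δ
    have h1 := ((hmem_s a).mp ha) δ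
    have h2 := (hil δ).2.2
    show min (a δ) ((P δ).m - 1) = a δ
    omega
  set T : (∀ δ, Fin ((P δ).m)) → ℝ := fun b =>
    ρ ^ dist1 (fun δ => (b δ : ℕ)) ix / convVol P (fun δ => (b δ : ℕ)) ix *
      ∫ y in prodAtomN P (fun δ => (b δ : ℕ)), |u y| with hT
  have hkern : kern P ρ u ix = ∑ b : (∀ δ, Fin ((P δ).m)), T b := rfl
  have hTnonneg : ∀ b, 0 ≤ T b := by
    intro b
    apply mul_nonneg
    · exact div_nonneg (pow_nonneg hρ0.le _)
        (convVol_pos P _ ix (fun δ => (b δ).2) hixm).le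
    · exact integral_nonneg fun y => abs_nonneg _
  have hterm : ∀ a ∈ s, (volume B).toReal⁻¹ * ∫ y in prodAtomN P a, |u y| ≤ C * T (e a) := by
    intro a ha
    have hrange := (hmem_s a).mp ha
    have ham : ∀ δ, a δ < (P δ).m := fun δ => by
      have := (hrange δ).2; have := (hil δ).2.2; omega
    have hVpos : 0 < convVol P a ix := convVol_pos P a ix ham hixm
    have hVle : convVol P a ix ≤ (volume B).toReal := by
      rw [hBvol]
      refine Finset.prod_le_prod (fun δ _ => ?_) (fun δ _ => ?_)
      · exact sub_nonneg.mpr ((P δ).pt_mono (by omega))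
      · have h1 : i δ ≤ min (a δ) (ix δ) := le_min (hrange δ).1 (hix' δ).1
        have h2 : max (a δ) (ix δ) + 1 ≤ i δ + l δ := by
          have := (hrange δ).2; have := (hix' δ).2; omega
        exact sub_le_sub ((P δ).pt_mono h2) ((P δ).pt_mono h1)
    have hdist : dist1 a ix ≤ 3 * ∑ δ, k δ := by
      rw [dist1, Finset.mul_sum]
      refine Finset.sum_le_sum fun δ _ => ?_
      have h1 := hrange δ; have h2 := hix' δ; have h3 := (hil δ).2.1
      omega
    have h1le : 1 ≤ C * ρ ^ dist1 a ix := by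
      have hpp : ρ ^ (3 * ∑ δ, k δ) ≤ ρ ^ dist1 a ix :=
        pow_le_pow_of_le_one hρ0.le hρ1.le hdist
      calc (1:ℝ) = C * ρ ^ (3 * ∑ δ, k δ) := by
            rw [hC, inv_mul_cancel₀ (pow_pos hρ0 _).ne']
        _ ≤ C * ρ ^ dist1 a ix := mul_le_mul_of_nonneg_left hpp (by positivity)
    have hTea : T (e a) = ρ ^ dist1 a ix / convVol P a ix * ∫ y in prodAtomN P a, |u y| := by
      rw [hT]; simp only [hcoe a ha]
    rw [hTea]
    have hinv : (volume B).toReal⁻¹ ≤ C * (ρ ^ dist1 a ix / convVol P a ix) := by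
      calc (volume B).toReal⁻¹ ≤ (convVol P a ix)⁻¹ := inv_anti₀ hVpos hVle
        _ = 1 * (convVol P a ix)⁻¹ := (one_mul _).symm
        _ ≤ (C * ρ ^ dist1 a ix) * (convVol P a ix)⁻¹ :=
            mul_le_mul_of_nonneg_right h1le (inv_nonneg.mpr hVpos.le)
        _ = C * (ρ ^ dist1 a ix / convVol P a ix) := by ring
    calc (volume B).toReal⁻¹ * ∫ y in prodAtomN P a, |u y|
        ≤ (C * (ρ ^ dist1 a ix / convVol P a ix)) * ∫ y in prodAtomN P a, |u y| :=
          mul_le_mul_of_nonneg_right hinv (integral_nonneg fun y => abs_nonneg _)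
      _ = C * (ρ ^ dist1 a ix / convVol P a ix * ∫ y in prodAtomN P a, |u y|) := by ring
  have hinj : ∀ a ∈ s, ∀ a' ∈ s, e a = e a' → a = a' := by
    intro a ha a' ha' h
    rw [← hcoe a ha, ← hcoe a' ha', h]
  rw [hint, Finset.mul_sum]
  calc ∑ a ∈ s, (volume B).toReal⁻¹ * ∫ y in prodAtomN P a, |u y|
      ≤ ∑ a ∈ s, C * T (e a) := Finset.sum_le_sum hterm
    _ = C * ∑ a ∈ s, T (e a) := (Finset.mul_sum _ _ _).symm
    _ = C * ∑ b ∈ s.image e, T b := by rw [Finset.sum_image hinj]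
    _ ≤ C * ∑ b : (∀ δ, Fin ((P δ).m)), T b := by
        refine mul_le_mul_of_nonneg_left ?_ (by positivity)
        exact Finset.sum_le_sum_of_subset_of_nonneg (Finset.subset_univ _)
          fun b _ _ => hTnonneg b
    _ = C * kern P ρ u ix := by rw [hkern]
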